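/- Let φ0(x) = π^{-1/4}·exp(−x²/2) and φ1(x) = √2·π^{-1/4}·x·exp(−x²/2) be the first two normalized Hermite functions, let 0 ≤ p ≤ 1, and define the two-variable wavefunction ψ(x,y) = √p·φ0(x)·φ0(y) + √(1−p)·φ1(x)·φ1(y) of the photonic Bell state Φ⁺ = √p|00⟩ + √(1−p)|11⟩. Then the sign-binned quadrature correlation of its position distribution equals ∫∫_{ℝ²} sgn(x·y)·ψ(x,y)² dx dy = (4/π)·√(p(1−p)); that is, the bit quadrature correlation equals 4/π times the negativity N_B = √(p(1−p)) of the Bell state. -/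

import Mathlib

open MeasureTheory Real

lemma aux_sign_meas : Measurable Real.sign := by
  unfold Real.sign
  exact Measurable.ite (measurableSet_lt measurable_id measurable_const) measurable_const
    (Measurable.ite (measurableSet_lt measurable_const measurable_id) measurable_const
      measurable_const)

lemma aux_abs_sign (x : ℝ) : ‖Real.sign x‖ ≤ 1 := by
  rcases Real.sign_apply_eq x with h | h | h <;> simp [h]

lemma aux_sign_mul (x y : ℝ) : Real.sign (x * y) = Real.sign x * Real.sign y := by
  rcases lt_trichotomy x 0 with hx | hx | hx
  · rcases lt_trichotomy y 0 with hy | hy | hy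
    · rw [Real.sign_of_pos (mul_pos_of_neg_of_neg hx hy), Real.sign_of_neg hx,
        Real.sign_of_neg hy]; ring
    · simp [hy]
    · rw [Real.sign_of_neg (mul_neg_of_neg_of_pos hx hy), Real.sign_of_neg hx,
        Real.sign_of_pos hy]; ring
  · simp [hx]
  · rcases lt_trichotomy y 0 with hy | hy | hy
    · rw [Real.sign_of_neg (mul_neg_of_pos_of_neg hx hy), Real.sign_of_pos hx,
        Real.sign_of_neg hy]; ring
    · simp [hy]
    · rw [Real.sign_of_pos (mul_pos hx hy), Real.sign_of_pos hx, Real.sign_of_pos hy]; ring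

lemma aux_sign_mul_self (x : ℝ) : Real.sign x * x = |x| := by
  rcases lt_trichotomy x 0 with hx | hx | hx
  · rw [Real.sign_of_neg hx, abs_of_neg hx]; ring
  · simp [hx]
  · rw [Real.sign_of_pos hx, abs_of_pos hx]; ring

lemma aux_odd_integral (f : ℝ → ℝ) (hf : ∀ x, f (-x) = - f x) : ∫ x, f x = 0 := by
  have h : ∫ x : ℝ, f (-x) = ∫ x : ℝ, f x := integral_neg_eq_self f _
  simp_rw [hf, integral_neg] at h
  linarith

lemma aux_Ioi : ∫ x in Set.Ioi (0:ℝ), x * Real.exp (-x ^ 2) = 1 / 2 := by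
  have hd : ∀ x ∈ Set.Ioi (0:ℝ), HasDerivAt (fun x : ℝ => -(Real.exp (-x ^ 2) / 2))
      (x * Real.exp (-x ^ 2)) x := by
    intro x _
    have h1 : HasDerivAt (fun x : ℝ => -x ^ 2) (-(2 * x)) x := by
      simpa using (hasDerivAt_pow 2 x).fun_neg
    have h2 := ((h1.exp).div_const 2).fun_neg
    rw [show x * Real.exp (-x ^ 2) = -(Real.exp (-x ^ 2) * -(2 * x) / 2) by ring]
    exact h2
  have hcont : ContinuousWithinAt (fun x : ℝ => -(Real.exp (-x ^ 2) / 2)) (Set.Ici 0) 0 :=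
    (Continuous.continuousWithinAt (by continuity))
  have hint : IntegrableOn (fun x : ℝ => x * Real.exp (-x ^ 2)) (Set.Ioi 0) := by
    have := integrable_mul_exp_neg_mul_sq (b := 1) one_pos
    simpa using this.integrableOn
  have htend : Filter.Tendsto (fun x : ℝ => -(Real.exp (-x ^ 2) / 2)) Filter.atTop (nhds 0) := by
    have h2 : Filter.Tendsto (fun x : ℝ => -x ^ 2) Filter.atTop Filter.atBot := by
      simpa using (tendsto_pow_atTop (n := 2) (by norm_num)).neg_atBot
    have := (Real.tendsto_exp_atBot.comp h2).neg.div_const 2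
    rw [show (fun x : ℝ => -(Real.exp (-x ^ 2) / 2)) = fun x : ℝ => -Real.exp (-x ^ 2) / 2 by
      funext x; ring]
    simpa using this
  have := integral_Ioi_of_hasDerivAt_of_tendsto hcont hd hint htend
  rw [this]; norm_num

lemma aux_abs_integral : ∫ x : ℝ, |x| * Real.exp (-x ^ 2) = 1 := by
  have h : ∀ x : ℝ, |x| * Real.exp (-x ^ 2) = |x| * Real.exp (-|x| ^ 2) := by
    intro x; rw [sq_abs]
  simp_rw [h]
  rw [integral_comp_abs (f := fun x : ℝ => x * Real.exp (-x ^ 2)), aux_Ioi]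
  norm_num

/-- **Bit quadrature correlations of the photonic Bell state
`Φ⁺ = √p|00⟩ + √(1−p)|11⟩`.** With `φ0, φ1` the first two normalized
Hermite functions and `ψ(x,y) = √p·φ0(x)φ0(y) + √(1−p)·φ1(x)φ1(y)`, the
sign-binned quadrature correlation of the position distribution `ψ²`
equals `(4/π)·√(p(1−p))`, i.e. `4/π` times the negativity. -/
theorem bell_state_phi_bit_correlation (p : ℝ) (hp0 : 0 ≤ p) (hp1 : p ≤ 1)
    (phi0 phi1 : ℝ → ℝ)
    (hphi0 : ∀ x : ℝ, phi0 x = π ^ (-(1 : ℝ) / 4) * Real.exp (-x ^ 2 / 2))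
    (hphi1 : ∀ x : ℝ, phi1 x =
      Real.sqrt 2 * π ^ (-(1 : ℝ) / 4) * x * Real.exp (-x ^ 2 / 2))
    (psi : ℝ → ℝ → ℝ)
    (hpsi : ∀ x y : ℝ, psi x y =
      Real.sqrt p * phi0 x * phi0 y + Real.sqrt (1 - p) * phi1 x * phi1 y) :
    ∫ q : ℝ × ℝ, Real.sign (q.1 * q.2) * (psi q.1 q.2) ^ 2
      = (4 / π) * Real.sqrt (p * (1 - p)) := by
  have hq0 : (0:ℝ) ≤ 1 - p := by linarith
  set c : ℝ := π ^ (-(1:ℝ)/4) with hc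
  have hexp : ∀ x : ℝ, Real.exp (-x ^ 2 / 2) * Real.exp (-x ^ 2 / 2) = Real.exp (-x ^ 2) := by
    intro x; rw [← Real.exp_add]; congr 1; ring
  have hphi0sq : ∀ x : ℝ, phi0 x ^ 2 = c ^ 2 * Real.exp (-x ^ 2) := by
    intro x
    calc phi0 x ^ 2 = c ^ 2 * (Real.exp (-x ^ 2 / 2) * Real.exp (-x ^ 2 / 2)) := by
          rw [hphi0]; ring
      _ = c ^ 2 * Real.exp (-x ^ 2) := by rw [hexp]
  have hphi1sq : ∀ x : ℝ, phi1 x ^ 2 = 2 * c ^ 2 * (x ^ 2 * Real.exp (-x ^ 2)) := by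
    intro x
    calc phi1 x ^ 2
        = Real.sqrt 2 ^ 2 * c ^ 2 * (x ^ 2 * (Real.exp (-x ^ 2 / 2) * Real.exp (-x ^ 2 / 2))) := by
          rw [hphi1]; ring
      _ = 2 * c ^ 2 * (x ^ 2 * Real.exp (-x ^ 2)) := by
          rw [hexp, Real.sq_sqrt (by norm_num : (0:ℝ) ≤ 2)]
  have hphi01 : ∀ x : ℝ, phi0 x * phi1 x = Real.sqrt 2 * c ^ 2 * (x * Real.exp (-x ^ 2)) := by
    intro x
    calc phi0 x * phi1 x
        = Real.sqrt 2 * c ^ 2 * (x * (Real.exp (-x ^ 2 / 2) * Real.exp (-x ^ 2 / 2))) := by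
          rw [hphi0, hphi1]; ring
      _ = Real.sqrt 2 * c ^ 2 * (x * Real.exp (-x ^ 2)) := by rw [hexp]
  -- integrability of building blocks
  have hgauss : Integrable (fun x : ℝ => Real.exp (-x ^ 2)) := by
    have := integrable_exp_neg_mul_sq (b := 1) one_pos
    simpa using this
  have hx2 : Integrable (fun x : ℝ => x ^ 2 * Real.exp (-x ^ 2)) := by
    have := integrable_rpow_mul_exp_neg_mul_sq (b := 1) one_pos (s := 2) (by norm_num)
    simpa [Real.rpow_natCast] using this
  have hxg : Integrable (fun x : ℝ => x * Real.exp (-x ^ 2)) := by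
    have := integrable_mul_exp_neg_mul_sq (b := 1) one_pos
    simpa using this
  have hif1 : Integrable (fun x : ℝ => Real.sign x * phi0 x ^ 2) := by
    refine (((hgauss.const_mul (c ^ 2)).bdd_mul aux_sign_meas.aestronglyMeasurable
      (Filter.Eventually.of_forall fun x => aux_abs_sign x)).congr (Filter.Eventually.of_forall fun x => ?_))
    simp only [hphi0sq]
  have hif2 : Integrable (fun x : ℝ => Real.sign x * phi1 x ^ 2) := by
    refine (((hx2.const_mul (2 * c ^ 2)).bdd_mul aux_sign_meas.aestronglyMeasurable
      (Filter.Eventually.of_forall fun x => aux_abs_sign x)).congr (Filter.Eventually.of_forall fun x => ?_))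
    simp only [hphi1sq]
  have hif3 : Integrable (fun x : ℝ => Real.sign x * (phi0 x * phi1 x)) := by
    refine (((hxg.const_mul (Real.sqrt 2 * c ^ 2)).bdd_mul aux_sign_meas.aestronglyMeasurable
      (Filter.Eventually.of_forall fun x => aux_abs_sign x)).congr (Filter.Eventually.of_forall fun x => ?_))
    simp only [hphi01]
  -- the three one-dimensional integrals
  have hI1 : ∫ x : ℝ, Real.sign x * phi0 x ^ 2 = 0 := by
    refine aux_odd_integral _ fun x => ?_
    have h0 : phi0 (-x) = phi0 x := by rw [hphi0, hphi0, neg_sq]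
    rw [h0, Real.sign_neg]; ring
  have hI2 : ∫ x : ℝ, Real.sign x * phi1 x ^ 2 = 0 := by
    refine aux_odd_integral _ fun x => ?_
    have h1 : phi1 (-x) = - phi1 x := by rw [hphi1, hphi1, neg_sq]; ring
    rw [h1, Real.sign_neg]; ring
  have hI3 : ∫ x : ℝ, Real.sign x * (phi0 x * phi1 x) = Real.sqrt 2 * c ^ 2 := by
    have h : ∀ x : ℝ, Real.sign x * (phi0 x * phi1 x)
        = Real.sqrt 2 * c ^ 2 * (|x| * Real.exp (-x ^ 2)) := by
      intro x
      rw [hphi01, show Real.sign x * (Real.sqrt 2 * c ^ 2 * (x * Real.exp (-x ^ 2)))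
        = Real.sqrt 2 * c ^ 2 * ((Real.sign x * x) * Real.exp (-x ^ 2)) by ring,
        aux_sign_mul_self]
    simp_rw [h]
    rw [integral_const_mul, aux_abs_integral, mul_one]
  -- pointwise decomposition of the integrand
  have hkey : (fun q : ℝ × ℝ => Real.sign (q.1 * q.2) * (psi q.1 q.2) ^ 2)
      = fun q : ℝ × ℝ =>
        p * ((Real.sign q.1 * phi0 q.1 ^ 2) * (Real.sign q.2 * phi0 q.2 ^ 2))
        + ((1 - p) * ((Real.sign q.1 * phi1 q.1 ^ 2) * (Real.sign q.2 * phi1 q.2 ^ 2))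
          + (2 * Real.sqrt p * Real.sqrt (1 - p))
            * ((Real.sign q.1 * (phi0 q.1 * phi1 q.1))
              * (Real.sign q.2 * (phi0 q.2 * phi1 q.2)))) := by
    funext q
    rw [aux_sign_mul, hpsi]
    have hp : Real.sqrt p ^ 2 = p := Real.sq_sqrt hp0
    have hq : Real.sqrt (1 - p) ^ 2 = 1 - p := Real.sq_sqrt hq0
    linear_combination (Real.sign q.1 * Real.sign q.2 * (phi0 q.1 ^ 2 * phi0 q.2 ^ 2)) * hp
      + (Real.sign q.1 * Real.sign q.2 * (phi1 q.1 ^ 2 * phi1 q.2 ^ 2)) * hq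
  rw [hkey, Measure.volume_eq_prod]
  have hg1 := (hif1.mul_prod hif1).const_mul p
  have hg2 := (hif2.mul_prod hif2).const_mul (1 - p)
  have hg3 := (hif3.mul_prod hif3).const_mul (2 * Real.sqrt p * Real.sqrt (1 - p))
  have hg23 : Integrable (fun q : ℝ × ℝ =>
      (1 - p) * (Real.sign q.1 * phi1 q.1 ^ 2 * (Real.sign q.2 * phi1 q.2 ^ 2))
      + 2 * Real.sqrt p * Real.sqrt (1 - p)
        * (Real.sign q.1 * (phi0 q.1 * phi1 q.1) * (Real.sign q.2 * (phi0 q.2 * phi1 q.2))))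
      (volume.prod volume) := hg2.add hg3
  rw [integral_add hg1 hg23]
  rw [integral_add hg2 hg3]
  rw [integral_const_mul, integral_const_mul, integral_const_mul]
  rw [integral_prod_mul (fun x : ℝ => Real.sign x * phi0 x ^ 2)
      (fun x : ℝ => Real.sign x * phi0 x ^ 2),
    integral_prod_mul (fun x : ℝ => Real.sign x * phi1 x ^ 2)
      (fun x : ℝ => Real.sign x * phi1 x ^ 2),
    integral_prod_mul (fun x : ℝ => Real.sign x * (phi0 x * phi1 x))
      (fun x : ℝ => Real.sign x * (phi0 x * phi1 x)), hI1, hI2, hI3]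
  have hc4 : (Real.sqrt 2 * c ^ 2) * (Real.sqrt 2 * c ^ 2) = 2 / π := by
    have h2 : Real.sqrt 2 * Real.sqrt 2 = 2 := Real.mul_self_sqrt (by norm_num)
    have hc4' : c ^ 2 * c ^ 2 = π⁻¹ := by
      have h4 : c ^ 2 * c ^ 2 = (π ^ (-(1:ℝ)/4)) ^ (4:ℕ) := by rw [hc]; ring
      rw [h4, ← Real.rpow_natCast (π ^ (-(1:ℝ)/4)) 4, ← Real.rpow_mul Real.pi_pos.le]
      norm_num [Real.rpow_neg_one]
    calc (Real.sqrt 2 * c ^ 2) * (Real.sqrt 2 * c ^ 2)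
        = (Real.sqrt 2 * Real.sqrt 2) * (c ^ 2 * c ^ 2) := by ring
      _ = 2 / π := by rw [h2, hc4']; rw [div_eq_mul_inv]
  rw [hc4, Real.sqrt_mul hp0]
  field_simp
  ring
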